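/- There is an absolute constant z₀ such that for every real z ≥ z₀ the following holds. Let X and Y be finite sets, let L' ⊆ L'' ⊆ X×Y with |L''| ≤ 0.1·z², and let x ∈ X satisfy deg_{L'}(x) > 0.5·z. Let X' ⊆ X and Y' ⊆ Y be independent 1/z-subsamples. Then Pr[ x ∈ X', and N_{L'}(x) ∩ Y' ≠ ∅, and L'' ∩ ((X'∖{x}) × Y') = ∅ ] ≥ 0.25/z, where N_{L'}(x) = {y ∈ Y : (x,y) ∈ L'}. -/

import Mathlib

open Finset

open Classical in
/-- The probability, over independent `1/z`-subsamples `X' ⊆ X` and `Y' ⊆ Y`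
(each element kept independently with probability `1/z`), of the event `E X' Y'`. -/
noncomputable def pairPr {α β : Type} [DecidableEq α] [DecidableEq β]
    (X : Finset α) (Y : Finset β) (z : ℝ) (E : Finset α → Finset β → Prop) : ℝ :=
  ∑ S ∈ X.powerset, ∑ T ∈ Y.powerset,
    ((1 / z) ^ S.card * (1 - 1 / z) ^ (X.card - S.card)) *
      ((1 / z) ^ T.card * (1 - 1 / z) ^ (Y.card - T.card)) *
      (if E S T then 1 else 0)

open Finset Classical
set_option linter.unusedSectionVars false

namespace HVD
variable {α : Type} [DecidableEq α]

noncomputable def w (X : Finset α) (p : ℝ) (S : Finset α) : ℝ :=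
  p ^ S.card * (1 - p) ^ (X.card - S.card)

lemma w_nonneg {p : ℝ} (hp0 : 0 ≤ p) (hp1 : p ≤ 1) (X S : Finset α) : 0 ≤ w X p S :=
  mul_nonneg (pow_nonneg hp0 _) (pow_nonneg (by linarith) _)

lemma sum_w (X : Finset α) (p : ℝ) : ∑ S ∈ X.powerset, w X p S = 1 := by
  have h := Finset.prod_add (fun _ : α => p) (fun _ : α => 1 - p) X
  simp only [add_sub_cancel, Finset.prod_const, one_pow] at h
  rw [eq_comm] at h
  calc ∑ S ∈ X.powerset, w X p S
      = ∑ t ∈ X.powerset, p ^ t.card * (1 - p) ^ (X \ t).card := by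
        refine Finset.sum_congr rfl fun t ht => ?_
        rw [Finset.mem_powerset] at ht
        simp [w, Finset.card_sdiff_of_subset ht]
    _ = 1 := h

lemma sum_w_sdiff (X A : Finset α) (p : ℝ) (hA : A ⊆ X) :
    ∑ S ∈ (X \ A).powerset, w X p S = (1 - p) ^ A.card := by
  have h1 : ∀ S ∈ (X \ A).powerset, w X p S = (1 - p) ^ A.card * w (X \ A) p S := by
    intro S hS
    rw [Finset.mem_powerset] at hS
    have hSc : S.card ≤ (X \ A).card := Finset.card_le_card hS
    have hXA : (X \ A).card = X.card - A.card := Finset.card_sdiff_of_subset hA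
    have hAX : A.card ≤ X.card := Finset.card_le_card hA
    have : X.card - S.card = A.card + ((X \ A).card - S.card) := by omega
    rw [w, w, this, pow_add]; ring
  rw [Finset.sum_congr rfl h1, ← Finset.mul_sum, sum_w, mul_one]

end HVD

section Events
open Finset Classical
namespace HVD
variable {α : Type} [DecidableEq α]

noncomputable def evPr (X : Finset α) (p : ℝ) (B : Finset α → Prop) : ℝ :=
  ∑ S ∈ X.powerset, w X p S * (if B S then 1 else 0)

lemma evPr_nonneg {p : ℝ} (hp0 : 0 ≤ p) (hp1 : p ≤ 1) (X : Finset α) (B : Finset α → Prop) :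
    0 ≤ evPr X p B :=
  Finset.sum_nonneg fun S _ => mul_nonneg (w_nonneg hp0 hp1 X S) (by positivity)

lemma evPr_compl (X : Finset α) (p : ℝ) (B : Finset α → Prop) :
    evPr X p B = 1 - evPr X p (fun S => ¬ B S) := by
  have : evPr X p B + evPr X p (fun S => ¬ B S) = 1 := by
    rw [evPr, evPr, ← Finset.sum_add_distrib]
    refine Eq.trans (Finset.sum_congr rfl fun S _ => ?_) (sum_w X p)
    by_cases h : B S <;> simp [h]
  linarith

/-- If `B S` (for `S ⊆ X`) is equivalent to `S ⊆ X \ A`, then its probability is `(1-p)^|A|`. -/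
lemma evPr_eq_avoid (X A : Finset α) (p : ℝ) (hA : A ⊆ X) (B : Finset α → Prop)
    (hB : ∀ S ⊆ X, (B S ↔ S ⊆ X \ A)) :
    evPr X p B = (1 - p) ^ A.card := by
  rw [evPr, ← sum_w_sdiff X A p hA]
  rw [← Finset.sum_subset (Finset.powerset_mono.2 (Finset.sdiff_subset))
    (fun S hS hS' => ?_)]
  · refine Finset.sum_congr rfl fun S hS => ?_
    rw [Finset.mem_powerset] at hS
    rw [if_pos ((hB S (hS.trans Finset.sdiff_subset)).2 hS), mul_one]
  · rw [Finset.mem_powerset] at hS hS'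
    rw [if_neg (fun hb => hS' ((hB S hS).1 hb)), mul_zero]

lemma evPr_mem_le {p : ℝ} (hp0 : 0 ≤ p) (hp1 : p ≤ 1) (X : Finset α) (a : α) :
    evPr X p (fun S => a ∈ S) ≤ p := by
  rw [evPr_compl]
  by_cases ha : a ∈ X
  · rw [evPr_eq_avoid X {a} p (by simpa using ha) _ (fun S hS => ?_)]
    · simp
    · simp [Finset.subset_sdiff, Finset.disjoint_singleton_right, hS]
  · have h1 : evPr X p (fun S => ¬ a ∈ S) = 1 := by
      have h2 : evPr X p (fun S => ¬ a ∈ S) = ∑ S ∈ X.powerset, w X p S := by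
        refine Finset.sum_congr rfl fun S hS => ?_
        rw [Finset.mem_powerset] at hS
        rw [if_pos (fun hmem => ha (hS hmem)), mul_one]
      rw [h2, sum_w]
    rw [h1]; linarith

lemma evPr_hit_ge (X A : Finset α) (p : ℝ) (hA : A ⊆ X) :
    evPr X p (fun S => ∃ y ∈ S, y ∈ A) = 1 - (1 - p) ^ A.card := by
  rw [evPr_compl, evPr_eq_avoid X A p hA _ (fun S hS => ?_)]
  push_neg
  rw [Finset.subset_sdiff]
  constructor
  · intro h; exact ⟨hS, Finset.disjoint_left.2 fun {y} hyS hyA => h y hyS hyA⟩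
  · rintro ⟨-, hd⟩ y hyS hyA; exact Finset.disjoint_left.1 hd hyS hyA

end HVD
end Events

section PairPr
open Finset Classical
namespace HVD
variable {α β : Type} [DecidableEq α] [DecidableEq β]

lemma pairPr_eq (X : Finset α) (Y : Finset β) (z : ℝ) (E : Finset α → Finset β → Prop) :
    pairPr X Y z E = ∑ S ∈ X.powerset, ∑ T ∈ Y.powerset,
      w X (1/z) S * w Y (1/z) T * (if E S T then 1 else 0) := rfl

lemma pairPr_congr (X : Finset α) (Y : Finset β) (z : ℝ) {E F : Finset α → Finset β → Prop}
    (h : ∀ S T, E S T ↔ F S T) : pairPr X Y z E = pairPr X Y z F := by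
  rw [pairPr_eq, pairPr_eq]
  refine Finset.sum_congr rfl fun S _ => Finset.sum_congr rfl fun T _ => ?_
  by_cases hE : E S T
  · rw [if_pos hE, if_pos ((h S T).1 hE)]
  · rw [if_neg hE, if_neg (fun hF => hE ((h S T).2 hF))]

variable {z : ℝ} (hp0 : 0 ≤ 1/z) (hp1 : 1/z ≤ 1)

include hp0 hp1 in
lemma pairPr_sub_le (X : Finset α) (Y : Finset β) (E F : Finset α → Finset β → Prop) :
    pairPr X Y z E - pairPr X Y z (fun S T => ¬ F S T) ≤
      pairPr X Y z (fun S T => E S T ∧ F S T) := by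
  rw [sub_le_iff_le_add, pairPr_eq, pairPr_eq, pairPr_eq, ← Finset.sum_add_distrib]
  refine Finset.sum_le_sum fun S _ => ?_
  rw [← Finset.sum_add_distrib]
  refine Finset.sum_le_sum fun T _ => ?_
  have hw : 0 ≤ w X (1/z) S * w Y (1/z) T :=
    mul_nonneg (w_nonneg hp0 hp1 _ _) (w_nonneg hp0 hp1 _ _)
  by_cases hE : E S T <;> by_cases hF : F S T
  · rw [if_pos hE, if_pos ⟨hE, hF⟩, if_neg (not_not_intro hF)]; linarith
  · rw [if_pos hE, if_neg (fun h => hF h.2), if_pos hF]; linarith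
  · rw [if_neg hE, if_neg (fun h => hE h.1), if_neg (not_not_intro hF)]; linarith
  · rw [if_neg hE, if_neg (fun h => hE h.1), if_pos hF]; linarith

lemma pairPr_prod (X : Finset α) (Y : Finset β) (z : ℝ)
    (A : Finset α → Prop) (B : Finset β → Prop) :
    pairPr X Y z (fun S T => A S ∧ B T) = evPr X (1/z) A * evPr Y (1/z) B := by
  rw [pairPr_eq, evPr, evPr, Finset.sum_mul_sum]
  refine Finset.sum_congr rfl fun S _ => Finset.sum_congr rfl fun T _ => ?_
  by_cases hA : A S <;> by_cases hB : B T <;> simp [hA, hB] <;> ring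

lemma evPr_true (X : Finset α) (p : ℝ) : evPr X p (fun _ => True) = 1 := by
  refine Eq.trans (Finset.sum_congr rfl fun S _ => ?_) (sum_w X p)
  simp

lemma pairPr_right (X : Finset α) (Y : Finset β) (z : ℝ) (B : Finset β → Prop) :
    pairPr X Y z (fun _ T => B T) = evPr Y (1/z) B := by
  rw [pairPr_congr X Y z (F := fun S T => (fun _ : Finset α => True) S ∧ B T)
    (fun S T => by simp), pairPr_prod, evPr_true, one_mul]

include hp0 hp1 in
lemma pairPr_union_bound {ι : Type*} (X : Finset α) (Y : Finset β) (s : Finset ι)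
    (E : ι → Finset α → Finset β → Prop) :
    pairPr X Y z (fun S T => ∃ i ∈ s, E i S T) ≤ ∑ i ∈ s, pairPr X Y z (E i) := by
  have hsw : ∑ i ∈ s, pairPr X Y z (E i) = ∑ S ∈ X.powerset, ∑ T ∈ Y.powerset,
      ∑ i ∈ s, w X (1/z) S * w Y (1/z) T * (if E i S T then 1 else 0) := by
    simp only [pairPr_eq]
    exact (Finset.sum_comm).trans
      (Finset.sum_congr rfl fun S _ => Finset.sum_comm)
  rw [hsw, pairPr_eq]
  refine Finset.sum_le_sum fun S _ => Finset.sum_le_sum fun T _ => ?_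
  have hw : 0 ≤ w X (1/z) S * w Y (1/z) T :=
    mul_nonneg (w_nonneg hp0 hp1 _ _) (w_nonneg hp0 hp1 _ _)
  by_cases hEx : ∃ i ∈ s, E i S T
  · obtain ⟨i₀, hi₀, hE₀⟩ := hEx
    rw [if_pos ⟨i₀, hi₀, hE₀⟩, mul_one]
    calc w X (1/z) S * w Y (1/z) T
        = w X (1/z) S * w Y (1/z) T * (if E i₀ S T then 1 else 0) := by
          rw [if_pos hE₀, mul_one]
      _ ≤ ∑ i ∈ s, w X (1/z) S * w Y (1/z) T * (if E i S T then 1 else 0) := by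
          exact Finset.single_le_sum
            (f := fun i => w X (1/z) S * w Y (1/z) T * (if E i S T then 1 else 0))
            (fun i _ => by positivity) hi₀
  · rw [if_neg hEx, mul_zero]
    refine Finset.sum_nonneg fun i _ => by positivity

lemma pairPr_condition (X : Finset α) (Y : Finset β) (z : ℝ) (x : α) (hx : x ∈ X)
    (F : Finset α → Finset β → Prop) :
    pairPr X Y z (fun S T => x ∈ S ∧ F (S.erase x) T) =
      (1/z) * pairPr (X.erase x) Y z F := by
  have hxe : x ∉ X.erase x := Finset.notMem_erase x X
  have hXi : X = insert x (X.erase x) := (Finset.insert_erase hx).symm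
  have hcard : X.card = (X.erase x).card + 1 := by
    rw [Finset.card_erase_of_mem hx]
    have := Finset.card_pos.2 ⟨x, hx⟩
    omega
  rw [pairPr_eq, pairPr_eq]
  conv_lhs => rw [hXi, Finset.sum_powerset_insert hxe]
  rw [Finset.mul_sum]
  refine Eq.trans (congrArg₂ (· + ·)
    (Finset.sum_eq_zero fun R hR => Finset.sum_eq_zero fun T _ => ?_)
    (Finset.sum_congr rfl fun R hR => ?_)) (zero_add _)
  · rw [Finset.mem_powerset] at hR
    rw [if_neg (fun h => hxe (hR h.1)), mul_zero]
  · rw [Finset.mem_powerset] at hR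
    have hxR : x ∉ R := fun h => hxe (hR h)
    have hwi : w (insert x (X.erase x)) (1/z) (insert x R)
        = (1/z) * w (X.erase x) (1/z) R := by
      simp only [w]
      rw [Finset.card_insert_of_notMem hxR, ← hXi]
      have h1 : X.card - (R.card + 1) = (X.erase x).card - R.card := by omega
      rw [h1, pow_succ]; ring
    rw [Finset.mul_sum]
    refine Finset.sum_congr rfl fun T _ => ?_
    have herase : (insert x R).erase x = R := Finset.erase_insert hxR
    by_cases hF : F R T
    · rw [if_pos hF, if_pos ⟨Finset.mem_insert_self x R, by rw [herase]; exact hF⟩, hwi]; ring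
    · rw [if_neg hF, if_neg (fun h => hF (herase ▸ h.2)), hwi]; ring

end HVD
end PairPr

section Main
open Finset Classical Real
namespace HVD

lemma evPr_congr {α : Type} [DecidableEq α] (X : Finset α) (p : ℝ)
    {B C : Finset α → Prop} (h : ∀ S, B S ↔ C S) : evPr X p B = evPr X p C := by
  refine Finset.sum_congr rfl fun S _ => ?_
  by_cases hB : B S
  · rw [if_pos hB, if_pos ((h S).1 hB)]
  · rw [if_neg hB, if_neg (fun hC => hB ((h S).2 hC))]

lemma exp_half_bound : Real.exp (-(1/2)) ≤ 0.65 := by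
  have h1 : Real.exp (-(1/2)) * Real.exp (1/2) = 1 := by
    rw [← Real.exp_add]; norm_num
  have h2 : Real.exp (1/2) * Real.exp (1/2) = Real.exp 1 := by
    rw [← Real.exp_add]; norm_num
  have h3 : (2.7182818283 : ℝ) < Real.exp 1 := Real.exp_one_gt_d9
  have h4 : 0 < Real.exp (1/2) := Real.exp_pos _
  have h5 : 0 < Real.exp (-(1/2)) := Real.exp_pos _
  nlinarith [sq_nonneg (Real.exp (1/2) - 1.6487)]

end HVD
end Main

section MainTheorem
open Classical Real HVD

/-- for a heavy vertex `x` (with `deg_{L'}(x) > 0.5·z`), with probability at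
least `0.25/z` we have `x ∈ X'`, the `L'`-neighborhood of `x` meets `Y'`, and no pair of
`L''` avoiding `x` survives in `(X' ∖ {x}) × Y'`. -/
theorem heavy_vertex_detected :
    ∃ z₀ : ℝ, ∀ z : ℝ, z₀ ≤ z →
    ∀ (α β : Type) (_ : DecidableEq α) (_ : DecidableEq β)
      (X : Finset α) (Y : Finset β) (L' L'' : Finset (α × β)),
      L' ⊆ L'' → L'' ⊆ X ×ˢ Y →
      (L''.card : ℝ) ≤ 0.1 * z ^ 2 →
      ∀ x ∈ X, 0.5 * z < ((L'.filter fun p => p.1 = x).card : ℝ) →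
        0.25 / z ≤ pairPr X Y z (fun S T =>
          x ∈ S ∧ (∃ y ∈ T, (x, y) ∈ L') ∧
            (L''.filter fun p => p.1 ∈ S.erase x ∧ p.2 ∈ T) = ∅) := by
  refine ⟨2, fun z hz2 α β _ _ X Y L' L'' hsub hXY hLcard x hx hdeg => ?_⟩
  have hz0 : (0:ℝ) < z := by linarith
  have hp0 : 0 ≤ 1/z := by positivity
  have hp1 : 1/z ≤ 1 := by
    rw [div_le_one hz0]; linarith
  -- the neighborhood of x
  set N : Finset β := (L'.filter fun p => p.1 = x).image Prod.snd with hN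
  have hNcard : N.card = (L'.filter fun p => p.1 = x).card := by
    refine Finset.card_image_of_injOn fun p hp q hq hpq => ?_
    rw [Finset.mem_coe, Finset.mem_filter] at hp hq
    exact Prod.ext (hp.2.trans hq.2.symm) hpq
  have hmemN : ∀ y, y ∈ N ↔ (x, y) ∈ L' := by
    intro y
    simp only [hN, Finset.mem_image, Finset.mem_filter]
    constructor
    · rintro ⟨⟨a, b⟩, ⟨hab, ha⟩, hb⟩
      cases ha; cases hb; exact hab
    · intro h; exact ⟨(x, y), ⟨h, rfl⟩, rfl⟩
  have hNY : N ⊆ Y := fun y hy => (Finset.mem_product.1 (hXY (hsub ((hmemN y).1 hy)))).2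
  -- conditioning on x ∈ S
  set F : Finset α → Finset β → Prop := fun R T =>
    (∃ y ∈ T, (x, y) ∈ L') ∧ (L''.filter fun p => p.1 ∈ R ∧ p.2 ∈ T) = ∅ with hF
  have hcond : pairPr X Y z (fun S T =>
      x ∈ S ∧ (∃ y ∈ T, (x, y) ∈ L') ∧
        (L''.filter fun p => p.1 ∈ S.erase x ∧ p.2 ∈ T) = ∅)
      = (1/z) * pairPr (X.erase x) Y z F := by
    rw [← pairPr_condition X Y z x hx F]
  -- the hit probability
  have hhit : pairPr (X.erase x) Y z (fun _ T => ∃ y ∈ T, (x, y) ∈ L')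
      = 1 - (1 - 1/z) ^ N.card := by
    rw [pairPr_right]
    rw [evPr_congr Y (1/z) (C := fun T => ∃ y ∈ T, y ∈ N)
      (fun T => by simp only [hmemN])]
    exact evPr_hit_ge Y N (1/z) hNY
  -- bound on the decay term
  have hdecay : (1 - 1/z) ^ N.card ≤ 0.65 := by
    have h1 : 1 - 1/z ≤ Real.exp (-(1/z)) := by
      have := Real.add_one_le_exp (-(1/z)); linarith
    have h2 : (1 - 1/z) ^ N.card ≤ Real.exp (-(1/z)) ^ N.card :=
      pow_le_pow_left₀ (by linarith) h1 _
    have h3 : Real.exp (-(1/z)) ^ N.card = Real.exp (-((N.card : ℝ)/z)) := by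
      rw [← Real.exp_nat_mul]; congr 1; ring
    have hn : 0.5 * z < (N.card : ℝ) := by rw [hNcard]; push_cast; exact hdeg
    have h4 : Real.exp (-((N.card : ℝ)/z)) ≤ Real.exp (-(1/2)) := by
      rw [Real.exp_le_exp, neg_le_neg_iff]
      rw [le_div_iff₀ hz0]
      linarith
    calc (1 - 1/z) ^ N.card ≤ Real.exp (-((N.card : ℝ)/z)) := by rw [← h3]; exact h2
      _ ≤ Real.exp (-(1/2)) := h4
      _ ≤ 0.65 := exp_half_bound
  -- union bound on surviving pairs
  have hbad : pairPr (X.erase x) Y z (fun R T =>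
      ¬ (L''.filter fun p => p.1 ∈ R ∧ p.2 ∈ T) = ∅) ≤ 0.1 := by
    have hiff : ∀ (R : Finset α) (T : Finset β),
        (¬ (L''.filter fun p => p.1 ∈ R ∧ p.2 ∈ T) = ∅) ↔
        ∃ q ∈ L'', q.1 ∈ R ∧ q.2 ∈ T := by
      intro R T
      constructor
      · intro h
        obtain ⟨q, hq⟩ := Finset.nonempty_iff_ne_empty.2 h
        rw [Finset.mem_filter] at hq
        exact ⟨q, hq.1, hq.2⟩
      · rintro ⟨q, hq1, hq2⟩ he
        have : q ∈ L''.filter fun p => p.1 ∈ R ∧ p.2 ∈ T :=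
          Finset.mem_filter.2 ⟨hq1, hq2⟩
        rw [he] at this
        exact absurd this (Finset.notMem_empty q)
    rw [pairPr_congr _ _ _ hiff]
    calc pairPr (X.erase x) Y z (fun R T => ∃ q ∈ L'', q.1 ∈ R ∧ q.2 ∈ T)
        ≤ ∑ q ∈ L'', pairPr (X.erase x) Y z (fun R T => q.1 ∈ R ∧ q.2 ∈ T) :=
          pairPr_union_bound hp0 hp1 _ _ _ _
      _ ≤ ∑ _q ∈ L'', (1/z) * (1/z) := by
          refine Finset.sum_le_sum fun q _ => ?_
          rw [pairPr_prod]
          exact mul_le_mul (evPr_mem_le hp0 hp1 _ _) (evPr_mem_le hp0 hp1 _ _)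
            (evPr_nonneg hp0 hp1 _ _) hp0
      _ = (L''.card : ℝ) * ((1/z) * (1/z)) := by rw [Finset.sum_const, nsmul_eq_mul]
      _ ≤ 0.1 * z^2 * ((1/z) * (1/z)) := by
          refine mul_le_mul_of_nonneg_right hLcard (by positivity)
      _ = 0.1 := by
          have hzz : z ≠ 0 := ne_of_gt hz0
          field_simp
  -- combine
  have hmain : 0.25 ≤ pairPr (X.erase x) Y z F := by
    have hle := pairPr_sub_le hp0 hp1 (X.erase x) Y
      (fun _ T => ∃ y ∈ T, (x, y) ∈ L')
      (fun R T => (L''.filter fun p => p.1 ∈ R ∧ p.2 ∈ T) = ∅)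
    rw [hhit] at hle
    have heq : pairPr (X.erase x) Y z (fun R T =>
        (∃ y ∈ T, (x, y) ∈ L') ∧ (L''.filter fun p => p.1 ∈ R ∧ p.2 ∈ T) = ∅)
        = pairPr (X.erase x) Y z F := pairPr_congr _ _ _ (fun S T => Iff.rfl)
    rw [heq] at hle
    linarith
  rw [hcond]
  calc (0.25 : ℝ) / z = 0.25 * (1/z) := by ring
    _ ≤ pairPr (X.erase x) Y z F * (1/z) := mul_le_mul_of_nonneg_right hmain hp0
    _ = (1/z) * pairPr (X.erase x) Y z F := by ring

end MainTheorem
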